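/- (Inner product formula for the Rădulescu-type vectors) Under the q-commutation hypotheses below, for all natural numbers r, s, r', s' with r + s = r' + s', one has ⟨ξ_{r,s}, ξ_{r',s'}⟩ = ∑_{i=0}^{r'} q^{(r-i)(r'-i) + k(r-i) + k(r'-i)}·[r']_q!·[s']_q!·binom(r,i)_q·binom(s,r'-i)_q, where terms with i > r or r' - i > s vanish since the corresponding q-binomial coefficient is 0 (so exponents there may be taken with truncated subtraction). -/

import Mathlib

open ContinuousLinearMap

/-- The q-integer `[n]_q = (1 - q^n)/(1 - q)`. -/
noncomputable def qInt (q : ℝ) (n : ℕ) : ℝ := (1 - q ^ n) / (1 - q)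

/-- The q-factorial `[n]_q! = [1]_q ⋯ [n]_q`, with `[0]_q! = 1`. -/
noncomputable def qFact (q : ℝ) : ℕ → ℝ
  | 0 => 1
  | n + 1 => qFact q n * qInt q (n + 1)

/-- The q-binomial coefficient `binom(n,m)_q`, with value `0` when `m > n`. -/
noncomputable def qBinom (q : ℝ) (n m : ℕ) : ℝ :=
  if m ≤ n then qFact q n / (qFact q m * qFact q (n - m)) else 0

/-! ### Auxiliary real lemmas -/

lemma qInt_zero {q : ℝ} : qInt q 0 = 0 := by simp [qInt]

lemma qInt_one {q : ℝ} (hq₂ : q < 1) : qInt q 1 = 1 := by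
  have h : (1:ℝ) - q > 0 := by linarith
  simp [qInt, div_self h.ne']

lemma qInt_pos {q : ℝ} (hq₁ : -1 < q) (hq₂ : q < 1) (n : ℕ) : 0 < qInt q (n + 1) := by
  have h1 : (0:ℝ) < 1 - q := by linarith
  have h2 : q ^ (n+1) < 1 := by
    calc q ^ (n+1) ≤ |q ^ (n+1)| := le_abs_self _
    _ = |q| ^ (n+1) := by rw [abs_pow]
    _ < 1 := pow_lt_one₀ (abs_nonneg q) (abs_lt.2 ⟨hq₁, hq₂⟩) (Nat.succ_ne_zero n)
  exact div_pos (by linarith) h1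

lemma qFact_pos {q : ℝ} (hq₁ : -1 < q) (hq₂ : q < 1) (n : ℕ) : 0 < qFact q n := by
  induction n with
  | zero => norm_num [qFact]
  | succ n ih => exact mul_pos ih (qInt_pos hq₁ hq₂ n)

lemma qInt_add {q : ℝ} (hq₂ : q < 1) (i m : ℕ) :
    qInt q (i + m) = qInt q i + q ^ i * qInt q m := by
  have h1 : (1:ℝ) - q ≠ 0 := by intro h; nlinarith
  unfold qInt
  field_simp
  ring

lemma qBinom_zero {q : ℝ} (hq₁ : -1 < q) (hq₂ : q < 1) (n : ℕ) : qBinom q n 0 = 1 := by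
  have := (qFact_pos hq₁ hq₂ n).ne'
  simp [qBinom, qFact]
  simpa using this

lemma key1 {q : ℝ} (hq₁ : -1 < q) (hq₂ : q < 1) (r m : ℕ) :
    qInt q r * qBinom q (r - 1) m = qInt q (m + 1) * qBinom q r (m + 1) := by
  match r with
  | 0 =>
    rw [qInt_zero, zero_mul, qBinom, if_neg (by omega), mul_zero]
  | n + 1 =>
    simp only [Nat.add_sub_cancel]
    unfold qBinom
    by_cases h : m ≤ n
    · rw [if_pos h, if_pos (by omega)]
      rw [show n + 1 - (m + 1) = n - m by omega]
      rw [show qFact q (n+1) = qFact q n * qInt q (n+1) from rfl,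
          show qFact q (m+1) = qFact q m * qInt q (m+1) from rfl]
      have h1 := (qFact_pos hq₁ hq₂ m).ne'
      have h2 := (qFact_pos hq₁ hq₂ (n - m)).ne'
      have h3 := (qInt_pos hq₁ hq₂ m).ne'
      have h4 := (qInt_pos hq₁ hq₂ n).ne'
      field_simp
    · rw [if_neg h, if_neg (by omega), mul_zero, mul_zero]

lemma qBinom_eq_zero {q : ℝ} {n m : ℕ} (h : n < m) : qBinom q n m = 0 := by
  rw [qBinom, if_neg (by omega)]

/-! ### The sum `Gsum` and its recursion -/

noncomputable def Gsum (q : ℝ) (k r s r' s' : ℕ) : ℝ :=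
  ∑ i ∈ Finset.range (r' + 1),
    q ^ ((r - i) * (r' - i) + k * (r - i) + k * (r' - i)) *
      qFact q r' * qFact q s' * qBinom q r i * qBinom q s (r' - i)

lemma Gsum_base {q : ℝ} (hq₁ : -1 < q) (hq₂ : q < 1) (k r s s' : ℕ) :
    Gsum q k r s 0 s' = q ^ (k * r) * qFact q s' := by
  unfold Gsum
  rw [Finset.sum_range_one]
  simp [qBinom_zero hq₁ hq₂, qFact]

lemma Gterm {q : ℝ} (hq₁ : -1 < q) (hq₂ : q < 1) (k r s r' : ℕ) {i : ℕ} (hi : i + 1 ≤ r') :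
    q ^ ((r - (i+1)) * (r' + 1 - (i+1)) + k * (r - (i+1)) + k * (r' + 1 - (i+1))) *
        qFact q (r'+1) * qBinom q r (i+1) * qBinom q s (r' + 1 - (i+1)) =
      qInt q r * (q ^ ((r - 1 - i) * (r' - i) + k * (r - 1 - i) + k * (r' - i)) *
        qFact q r' * qBinom q (r-1) i * qBinom q s (r' - i)) +
      q ^ (r + k) * qInt q s * (q ^ ((r - (i+1)) * (r' - (i+1)) + k * (r - (i+1)) + k * (r' - (i+1))) *
        qFact q r' * qBinom q r (i+1) * qBinom q (s-1) (r' - (i+1))) := by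
  by_cases hir : i + 1 ≤ r
  · obtain ⟨a, rfl⟩ : ∃ a, r = i + 1 + a := ⟨r - (i+1), by omega⟩
    obtain ⟨m, rfl⟩ : ∃ m, r' = i + 1 + m := ⟨r' - (i+1), by omega⟩
    have e1 : i + 1 + a - (i + 1) = a := by omega
    have e2 : i + 1 + m + 1 - (i + 1) = m + 1 := by omega
    have e3 : i + 1 + a - 1 - i = a := by omega
    have e4 : i + 1 + m - i = m + 1 := by omega
    have e5 : i + 1 + m - (i + 1) = m := by omega
    rw [e1, e2, e3, e4, e5]
    have hfact : qFact q (i + 1 + m + 1) = qFact q (i + 1 + m) * qInt q (i + 1 + m + 1) := rfl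
    have hAD : qInt q ((i+1) + (m+1)) = qInt q (i+1) + q ^ (i+1) * qInt q (m+1) :=
      qInt_add hq₂ (i+1) (m+1)
    have hK1 : qInt q (i + 1 + a) * qBinom q (i + 1 + a - 1) i
        = qInt q (i + 1) * qBinom q (i + 1 + a) (i + 1) := key1 hq₁ hq₂ _ i
    have hK2 : qInt q s * qBinom q (s - 1) m = qInt q (m + 1) * qBinom q s (m + 1) :=
      key1 hq₁ hq₂ s m
    have e6 : i + 1 + a - 1 = i + a := by omega
    rw [e6] at hK1
    rw [show i + 1 + a - 1 = i + a from e6]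
    have e7 : (i + 1) + (m + 1) = i + 1 + m + 1 := by omega
    rw [e7] at hAD
    rw [hfact, hAD]
    have hpow : a * (m + 1) + k * a + k * (m + 1) + (i + 1)
        = (i + 1 + a) + k + (a * m + k * a + k * m) := by ring
    have hq' : q ^ (a * (m + 1) + k * a + k * (m + 1)) * q ^ (i + 1)
        = q ^ ((i + 1 + a) + k) * q ^ (a * m + k * a + k * m) := by
      rw [← pow_add, ← pow_add, hpow]
    linear_combination (q ^ (a * (m + 1) + k * a + k * (m + 1)) * qFact q (i + 1 + m) *
        qBinom q s (m + 1)) * hK1.symm +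
      (q ^ ((i + 1 + a) + k) * q ^ (a * m + k * a + k * m) * qFact q (i + 1 + m) *
        qBinom q (i + 1 + a) (i + 1)) * hK2.symm +
      (qFact q (i + 1 + m) * qBinom q (i + 1 + a) (i + 1) * qBinom q s (m + 1) * qInt q (m+1)) * hq'
  · have b1 : qBinom q r (i+1) = 0 := qBinom_eq_zero (by omega)
    rw [b1]
    rcases Nat.eq_zero_or_pos r with hr | hr
    · subst hr; rw [qInt_zero]; ring
    · have b2 : qBinom q (r-1) i = 0 := qBinom_eq_zero (by omega)
      rw [b2]; ring

lemma Gedge1 {q : ℝ} (hq₁ : -1 < q) (hq₂ : q < 1) (k r s r' : ℕ) :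
    q ^ ((r - (r'+1)) * (r' + 1 - (r'+1)) + k * (r - (r'+1)) + k * (r' + 1 - (r'+1))) *
        qFact q (r'+1) * qBinom q r (r'+1) * qBinom q s (r' + 1 - (r'+1)) =
      qInt q r * (q ^ ((r - 1 - r') * (r' - r') + k * (r - 1 - r') + k * (r' - r')) *
        qFact q r' * qBinom q (r-1) r' * qBinom q s (r' - r')) := by
  have e1 : r' + 1 - (r' + 1) = 0 := by omega
  have e2 : r' - r' = 0 := by omega
  have e3 : r - 1 - r' = r - (r' + 1) := by omega
  rw [e1, e2, e3]
  have hfact : qFact q (r' + 1) = qFact q r' * qInt q (r' + 1) := rfl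
  have hK := key1 hq₁ hq₂ r r'
  rw [hfact]
  simp only [Nat.mul_zero, Nat.zero_mul, Nat.add_zero, Nat.zero_add]
  linear_combination (q ^ (k * (r - (r'+1))) * qFact q r' * qBinom q s 0) * hK.symm

lemma Gedge2 {q : ℝ} (hq₁ : -1 < q) (hq₂ : q < 1) (k r s r' : ℕ) :
    q ^ ((r - 0) * (r' + 1 - 0) + k * (r - 0) + k * (r' + 1 - 0)) *
        qFact q (r'+1) * qBinom q r 0 * qBinom q s (r' + 1 - 0) =
      q ^ (r + k) * qInt q s * (q ^ ((r - 0) * (r' - 0) + k * (r - 0) + k * (r' - 0)) *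
        qFact q r' * qBinom q r 0 * qBinom q (s-1) (r' - 0)) := by
  simp only [Nat.sub_zero]
  have hfact : qFact q (r' + 1) = qFact q r' * qInt q (r' + 1) := rfl
  have hK := key1 hq₁ hq₂ s r'
  rw [hfact]
  have hpow : q ^ (r * (r' + 1) + k * r + k * (r' + 1)) =
      q ^ (r + k) * q ^ (r * r' + k * r + k * r') := by
    rw [← pow_add]; congr 1; ring
  rw [hpow]
  linear_combination (q ^ (r + k) * q ^ (r * r' + k * r + k * r') * qFact q r' * qBinom q r 0) * hK.symm

lemma Gsum_rec {q : ℝ} (hq₁ : -1 < q) (hq₂ : q < 1) (k r s r' s' : ℕ) :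
    Gsum q k r s (r' + 1) s' =
      qInt q r * Gsum q k (r - 1) s r' s' +
        q ^ (r + k) * qInt q s * Gsum q k r (s - 1) r' s' := by
  unfold Gsum
  rw [Finset.mul_sum, Finset.mul_sum]
  rw [Finset.sum_range_succ'
    (fun j => q ^ ((r - j) * (r' + 1 - j) + k * (r - j) + k * (r' + 1 - j)) *
      qFact q (r'+1) * qFact q s' * qBinom q r j * qBinom q s (r' + 1 - j)) (r'+1)]
  rw [Finset.sum_range_succ
    (fun i => q ^ ((r - (i+1)) * (r' + 1 - (i+1)) + k * (r - (i+1)) + k * (r' + 1 - (i+1))) *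
      qFact q (r'+1) * qFact q s' * qBinom q r (i+1) * qBinom q s (r' + 1 - (i+1)))]
  rw [Finset.sum_range_succ
    (fun i => qInt q r * (q ^ ((r - 1 - i) * (r' - i) + k * (r - 1 - i) + k * (r' - i)) *
      qFact q r' * qFact q s' * qBinom q (r-1) i * qBinom q s (r' - i)))]
  rw [Finset.sum_range_succ'
    (fun i => q ^ (r + k) * qInt q s * (q ^ ((r - i) * (r' - i) + k * (r - i) + k * (r' - i)) *
      qFact q r' * qFact q s' * qBinom q r i * qBinom q (s-1) (r' - i))) r']
  have hsplit : ∀ i ∈ Finset.range r',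
      q ^ ((r - (i+1)) * (r' + 1 - (i+1)) + k * (r - (i+1)) + k * (r' + 1 - (i+1))) *
        qFact q (r'+1) * qFact q s' * qBinom q r (i+1) * qBinom q s (r' + 1 - (i+1)) =
      qInt q r * (q ^ ((r - 1 - i) * (r' - i) + k * (r - 1 - i) + k * (r' - i)) *
        qFact q r' * qFact q s' * qBinom q (r-1) i * qBinom q s (r' - i)) +
      q ^ (r + k) * qInt q s * (q ^ ((r - (i+1)) * (r' - (i+1)) + k * (r - (i+1)) + k * (r' - (i+1))) *
        qFact q r' * qFact q s' * qBinom q r (i+1) * qBinom q (s-1) (r' - (i+1))) := by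
    intro i hi
    have h := Gterm hq₁ hq₂ k r s r' (Finset.mem_range.mp hi)
    linear_combination (qFact q s') * h
  rw [Finset.sum_congr rfl hsplit, Finset.sum_add_distrib]
  have he1 := Gedge1 hq₁ hq₂ k r s r'
  have he2 := Gedge2 hq₁ hq₂ k r s r'
  linear_combination (qFact q s') * he1 + (qFact q s') * he2

/-! ### Vector lemmas -/

section op
set_option linter.unusedSectionVars false
variable {H : Type*} [NormedAddCommGroup H] [InnerProductSpace ℂ H] [CompleteSpace H]
variable {q : ℝ} {c cr W : H →L[ℂ] H} {k : ℕ} {ξ : H}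

lemma xi_succ_left' (r s : ℕ) : (c ^ (r+1) * cr ^ s) ξ = c ((c ^ r * cr ^ s) ξ) := by
  rw [pow_succ', mul_assoc, ContinuousLinearMap.mul_apply]

lemma xi_succ_right' (s : ℕ) : ((c:H →L[ℂ] H) ^ 0 * cr ^ (s+1)) ξ = cr ((c ^ 0 * cr ^ s) ξ) := by
  simp only [pow_succ', ContinuousLinearMap.mul_apply, pow_zero, one_mul]

lemma W_xi' (h6' : ∀ x, W (c x) = (q:ℂ) • c (W x)) (h7' : ∀ x, W (cr x) = (q:ℂ) • cr (W x))
    (hW : W ξ = ((q:ℂ) ^ k) • ξ) (r s : ℕ) :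
    W ((c ^ r * cr ^ s) ξ) = (((q ^ (r + s + k) : ℝ)) : ℂ) • (c ^ r * cr ^ s) ξ := by
  induction r with
  | zero =>
    induction s with
    | zero => simpa using hW
    | succ s ih =>
      rw [xi_succ_right', h7', ih, map_smul, smul_smul]
      congr 1
      push_cast
      ring
  | succ r ih =>
    rw [xi_succ_left', h6', ih, map_smul, smul_smul]
    congr 1
    push_cast
    ring

lemma a_xi0 (hq₂ : q < 1)
    (h4' : ∀ x, adjoint c (cr x) = cr (adjoint c x) + W x)
    (h6' : ∀ x, W (c x) = (q:ℂ) • c (W x)) (h7' : ∀ x, W (cr x) = (q:ℂ) • cr (W x))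
    (hc : adjoint c ξ = 0) (hW : W ξ = ((q:ℂ) ^ k) • ξ) (s : ℕ) :
    adjoint c (((c:H →L[ℂ] H) ^ 0 * cr ^ s) ξ) =
      (((q ^ k * qInt q s : ℝ)) : ℂ) • ((c:H →L[ℂ] H) ^ 0 * cr ^ (s - 1)) ξ := by
  induction s with
  | zero =>
    simp only [pow_zero, one_mul, one_apply, hc, qInt_zero]
    simp [hc]
  | succ s ih =>
    rw [xi_succ_right', h4', ih, map_smul, W_xi' h6' h7' hW]
    match s with
    | 0 =>
      rw [Nat.add_sub_cancel]
      simp only [qInt_zero, qInt_one hq₂, mul_zero, Complex.ofReal_zero, zero_smul, smul_zero,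
        zero_add, Nat.zero_sub]
      congr 1
      push_cast
      ring
    | t + 1 =>
      rw [Nat.add_sub_cancel, Nat.add_sub_cancel, ← xi_succ_right',
        qInt_add hq₂ (t + 1) 1, qInt_one hq₂, ← add_smul]
      congr 1
      push_cast
      ring

lemma a_xi' (hq₂ : q < 1)
    (h1' : ∀ x, adjoint c (c x) = (q:ℂ) • c (adjoint c x) + x)
    (h4' : ∀ x, adjoint c (cr x) = cr (adjoint c x) + W x)
    (h6' : ∀ x, W (c x) = (q:ℂ) • c (W x)) (h7' : ∀ x, W (cr x) = (q:ℂ) • cr (W x))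
    (hc : adjoint c ξ = 0) (hW : W ξ = ((q:ℂ) ^ k) • ξ) (r s : ℕ) :
    adjoint c ((c ^ r * cr ^ s) ξ) =
      (((qInt q r : ℝ)) : ℂ) • (c ^ (r - 1) * cr ^ s) ξ +
        (((q ^ (r + k) * qInt q s : ℝ)) : ℂ) • (c ^ r * cr ^ (s - 1)) ξ := by
  induction r with
  | zero =>
    rw [a_xi0 hq₂ h4' h6' h7' hc hW s, qInt_zero]
    simp
  | succ r ih =>
    rw [xi_succ_left', h1', ih, map_add, map_smul, map_smul, Nat.add_sub_cancel]
    match r with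
    | 0 =>
      rw [← xi_succ_left', ← xi_succ_left', qInt_zero, qInt_one hq₂]
      push_cast
      simp only [zero_smul, smul_zero, zero_add, one_smul]
      match_scalars <;> push_cast <;> ring
    | t + 1 =>
      rw [Nat.add_sub_cancel, ← xi_succ_left', ← xi_succ_left']
      have hq1 : qInt q (t + 1 + 1) = 1 + q * qInt q (t + 1) := by
        rw [show t + 1 + 1 = 1 + (t + 1) by omega, qInt_add hq₂ 1 (t + 1), qInt_one hq₂]
        ring
      rw [hq1]
      push_cast
      match_scalars <;> push_cast <;> ring

lemma b_xi0 (hq₂ : q < 1)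
    (h2' : ∀ x, adjoint cr (cr x) = (q:ℂ) • cr (adjoint cr x) + x)
    (hcr : adjoint cr ξ = 0) (s : ℕ) :
    adjoint cr (((c:H →L[ℂ] H) ^ 0 * cr ^ s) ξ) =
      (((qInt q s : ℝ)) : ℂ) • ((c:H →L[ℂ] H) ^ 0 * cr ^ (s - 1)) ξ := by
  induction s with
  | zero =>
    simp only [pow_zero, one_mul, one_apply, hcr, qInt_zero]
    simp [hcr]
  | succ s ih =>
    rw [xi_succ_right', h2', ih, map_smul, Nat.add_sub_cancel]
    match s with
    | 0 =>
      rw [qInt_zero, qInt_one hq₂]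
      simp
    | t + 1 =>
      rw [Nat.add_sub_cancel, ← xi_succ_right']
      have hq1 : qInt q (t + 1 + 1) = 1 + q * qInt q (t + 1) := by
        rw [show t + 1 + 1 = 1 + (t + 1) by omega, qInt_add hq₂ 1 (t + 1), qInt_one hq₂]
        ring
      rw [hq1]
      match_scalars <;> push_cast <;> ring

lemma b_xi (hq₂ : q < 1)
    (h2' : ∀ x, adjoint cr (cr x) = (q:ℂ) • cr (adjoint cr x) + x)
    (h5' : ∀ x, adjoint cr (c x) = c (adjoint cr x) + W x)
    (h6' : ∀ x, W (c x) = (q:ℂ) • c (W x)) (h7' : ∀ x, W (cr x) = (q:ℂ) • cr (W x))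
    (hcr : adjoint cr ξ = 0) (hW : W ξ = ((q:ℂ) ^ k) • ξ) (r s : ℕ) :
    adjoint cr ((c ^ r * cr ^ s) ξ) =
      (((qInt q s : ℝ)) : ℂ) • (c ^ r * cr ^ (s - 1)) ξ +
        (((q ^ (s + k) * qInt q r : ℝ)) : ℂ) • (c ^ (r - 1) * cr ^ s) ξ := by
  induction r with
  | zero =>
    rw [b_xi0 hq₂ h2' hcr s, qInt_zero]
    simp
  | succ r ih =>
    rw [xi_succ_left', h5', ih, map_add, map_smul, map_smul,
      W_xi' h6' h7' hW, Nat.add_sub_cancel]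
    match r with
    | 0 =>
      rw [← xi_succ_left', qInt_zero, qInt_one hq₂]
      match_scalars <;> push_cast <;> ring
    | t + 1 =>
      rw [Nat.add_sub_cancel, ← xi_succ_left', ← xi_succ_left']
      have hq1 : qInt q (t + 1 + 1) = qInt q (t + 1) + q ^ (t + 1) := by
        rw [qInt_add hq₂ (t + 1) 1, qInt_one hq₂, mul_one]
      rw [hq1]
      match_scalars <;> push_cast <;> ring

lemma inner_rec_left (hq₂ : q < 1)
    (h1' : ∀ x, adjoint c (c x) = (q:ℂ) • c (adjoint c x) + x)
    (h4' : ∀ x, adjoint c (cr x) = cr (adjoint c x) + W x)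
    (h6' : ∀ x, W (c x) = (q:ℂ) • c (W x)) (h7' : ∀ x, W (cr x) = (q:ℂ) • cr (W x))
    (hc : adjoint c ξ = 0) (hW : W ξ = ((q:ℂ) ^ k) • ξ) (r s r' s' : ℕ) :
    (inner ℂ ((c ^ r * cr ^ s) ξ) ((c ^ (r'+1) * cr ^ s') ξ) : ℂ) =
      ((qInt q r : ℝ) : ℂ) * inner ℂ ((c ^ (r-1) * cr ^ s) ξ) ((c ^ r' * cr ^ s') ξ) +
        ((q ^ (r+k) * qInt q s : ℝ) : ℂ) * inner ℂ ((c ^ r * cr ^ (s-1)) ξ) ((c ^ r' * cr ^ s') ξ) := by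
  rw [xi_succ_left' r' s', ← adjoint_inner_left,
    a_xi' hq₂ h1' h4' h6' h7' hc hW r s, inner_add_left, inner_smul_left, inner_smul_left]
  simp [Complex.conj_ofReal]

lemma inner_rec_right (hq₂ : q < 1)
    (h2' : ∀ x, adjoint cr (cr x) = (q:ℂ) • cr (adjoint cr x) + x)
    (h5' : ∀ x, adjoint cr (c x) = c (adjoint cr x) + W x)
    (h6' : ∀ x, W (c x) = (q:ℂ) • c (W x)) (h7' : ∀ x, W (cr x) = (q:ℂ) • cr (W x))
    (hcr : adjoint cr ξ = 0) (hW : W ξ = ((q:ℂ) ^ k) • ξ) (r s s' : ℕ) :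
    (inner ℂ ((c ^ r * cr ^ s) ξ) ((c ^ 0 * cr ^ (s'+1)) ξ) : ℂ) =
      ((qInt q s : ℝ) : ℂ) * inner ℂ ((c ^ r * cr ^ (s-1)) ξ) ((c ^ 0 * cr ^ s') ξ) +
        ((q ^ (s+k) * qInt q r : ℝ) : ℂ) * inner ℂ ((c ^ (r-1) * cr ^ s) ξ) ((c ^ 0 * cr ^ s') ξ) := by
  rw [xi_succ_right' s', ← adjoint_inner_left,
    b_xi hq₂ h2' h5' h6' h7' hcr hW r s, inner_add_left, inner_smul_left, inner_smul_left]
  simp [Complex.conj_ofReal]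

lemma inner_base (hq₂ : q < 1)
    (h2' : ∀ x, adjoint cr (cr x) = (q:ℂ) • cr (adjoint cr x) + x)
    (h5' : ∀ x, adjoint cr (c x) = c (adjoint cr x) + W x)
    (h6' : ∀ x, W (c x) = (q:ℂ) • c (W x)) (h7' : ∀ x, W (cr x) = (q:ℂ) • cr (W x))
    (hcr : adjoint cr ξ = 0) (hW : W ξ = ((q:ℂ) ^ k) • ξ) (hξ : ‖ξ‖ = 1) :
    ∀ s' r s, r + s = s' →
      (inner ℂ ((c ^ r * cr ^ s) ξ) ((c ^ 0 * cr ^ s') ξ) : ℂ) =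
        ((q ^ (k * r) * qFact q s' : ℝ) : ℂ) := by
  intro s'
  induction s' with
  | zero =>
    intro r s h
    obtain ⟨rfl, rfl⟩ : r = 0 ∧ s = 0 := by omega
    simp only [pow_zero, one_mul, ContinuousLinearMap.one_apply, Nat.mul_zero]
    rw [show qFact q 0 = 1 from rfl]
    rw [inner_self_eq_norm_sq_to_K, hξ]
    norm_num
  | succ s' IH =>
    intro r s h
    rw [inner_rec_right hq₂ h2' h5' h6' h7' hcr hW r s s']
    rcases s with _ | t
    · obtain rfl : r = s' + 1 := by omega
      rw [qInt_zero, Nat.add_sub_cancel, IH s' 0 (by omega),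
        show qFact q (s'+1) = qFact q s' * qInt q (s'+1) from rfl]
      push_cast
      ring
    · rcases r with _ | u
      · obtain rfl : t = s' := by omega
        rw [Nat.add_sub_cancel, qInt_zero, IH 0 t (by omega),
          show qFact q (t+1) = qFact q t * qInt q (t+1) from rfl]
        push_cast
        ring
      · rw [Nat.add_sub_cancel, Nat.add_sub_cancel, IH (u+1) t (by omega),
          IH u (t+1) (by omega)]
        have hint : qInt q (s'+1) = qInt q (t+1) + q^(t+1) * qInt q (u+1) := by
          rw [show s'+1 = (t+1)+(u+1) by omega]; exact qInt_add hq₂ _ _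
        rw [show qFact q (s'+1) = qFact q s' * qInt q (s'+1) from rfl, hint]
        push_cast
        ring

lemma main_lemma (hq₁ : -1 < q) (hq₂ : q < 1)
    (h1' : ∀ x, adjoint c (c x) = (q:ℂ) • c (adjoint c x) + x)
    (h2' : ∀ x, adjoint cr (cr x) = (q:ℂ) • cr (adjoint cr x) + x)
    (h4' : ∀ x, adjoint c (cr x) = cr (adjoint c x) + W x)
    (h5' : ∀ x, adjoint cr (c x) = c (adjoint cr x) + W x)
    (h6' : ∀ x, W (c x) = (q:ℂ) • c (W x)) (h7' : ∀ x, W (cr x) = (q:ℂ) • cr (W x))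
    (hc : adjoint c ξ = 0) (hcr : adjoint cr ξ = 0)
    (hW : W ξ = ((q:ℂ) ^ k) • ξ) (hξ : ‖ξ‖ = 1) :
    ∀ r' s' r s, r + s = r' + s' →
      (inner ℂ ((c ^ r * cr ^ s) ξ) ((c ^ r' * cr ^ s') ξ) : ℂ) =
        ((Gsum q k r s r' s' : ℝ) : ℂ) := by
  intro r'
  induction r' with
  | zero =>
    intro s' r s h
    rw [Gsum_base hq₁ hq₂]
    exact inner_base hq₂ h2' h5' h6' h7' hcr hW hξ s' r s (by omega)
  | succ r' IH =>
    intro s' r s h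
    rw [inner_rec_left hq₂ h1' h4' h6' h7' hc hW r s r' s',
      Gsum_rec hq₁ hq₂ k r s r' s']
    rcases r with _ | u
    · rcases s with _ | t
      · omega
      · rw [qInt_zero, Nat.add_sub_cancel, IH s' 0 t (by omega)]
        push_cast
        ring
    · rcases s with _ | t
      · rw [qInt_zero, Nat.add_sub_cancel, IH s' u 0 (by omega)]
        push_cast
        ring
      · rw [Nat.add_sub_cancel, Nat.add_sub_cancel, IH s' u (t+1) (by omega),
          IH s' (u+1) t (by omega)]
        push_cast
        ring

end op


/-- Inner product formula for the Rădulescu-type vectors `ξ_{r,s} = c^r c_r^s ξ`. -/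
theorem inner_xi_formula (q : ℝ) (hq₁ : -1 < q) (hq₂ : q < 1)
    {H : Type*} [NormedAddCommGroup H] [InnerProductSpace ℂ H] [CompleteSpace H]
    (c cr W : H →L[ℂ] H)
    (h1 : adjoint c * c = (q : ℂ) • (c * adjoint c) + 1)
    (h2 : adjoint cr * cr = (q : ℂ) • (cr * adjoint cr) + 1)
    (h3 : c * cr = cr * c)
    (h4 : adjoint c * cr = cr * adjoint c + W)
    (h5 : adjoint cr * c = c * adjoint cr + W)
    (h6 : W * c = (q : ℂ) • (c * W))
    (h7 : W * cr = (q : ℂ) • (cr * W))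
    (h8 : adjoint c * W = (q : ℂ) • (W * adjoint c))
    (h9 : adjoint cr * W = (q : ℂ) • (W * adjoint cr))
    (k : ℕ) (ξ : H) (hξ : ‖ξ‖ = 1)
    (hc : adjoint c ξ = 0) (hcr : adjoint cr ξ = 0)
    (hW : W ξ = ((q : ℂ) ^ k) • ξ)
    (r s r' s' : ℕ) (hsum : r + s = r' + s') :
    (inner ℂ ((c ^ r * cr ^ s) ξ) ((c ^ r' * cr ^ s') ξ) : ℂ) =
      ((∑ i ∈ Finset.range (r' + 1),
        q ^ ((r - i) * (r' - i) + k * (r - i) + k * (r' - i)) *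
          qFact q r' * qFact q s' * qBinom q r i * qBinom q s (r' - i) : ℝ) : ℂ) := by
  have h1' : ∀ x, adjoint c (c x) = (q:ℂ) • c (adjoint c x) + x := fun x => by
    have := congrArg (fun T : H →L[ℂ] H => T x) h1
    simpa [ContinuousLinearMap.mul_apply, add_apply, smul_apply, one_apply] using this
  have h2' : ∀ x, adjoint cr (cr x) = (q:ℂ) • cr (adjoint cr x) + x := fun x => by
    have := congrArg (fun T : H →L[ℂ] H => T x) h2
    simpa [ContinuousLinearMap.mul_apply, add_apply, smul_apply, one_apply] using this
  have h4' : ∀ x, adjoint c (cr x) = cr (adjoint c x) + W x := fun x => by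
    have := congrArg (fun T : H →L[ℂ] H => T x) h4
    simpa [ContinuousLinearMap.mul_apply, add_apply] using this
  have h5' : ∀ x, adjoint cr (c x) = c (adjoint cr x) + W x := fun x => by
    have := congrArg (fun T : H →L[ℂ] H => T x) h5
    simpa [ContinuousLinearMap.mul_apply, add_apply] using this
  have h6' : ∀ x, W (c x) = (q:ℂ) • c (W x) := fun x => by
    have := congrArg (fun T : H →L[ℂ] H => T x) h6
    simpa [ContinuousLinearMap.mul_apply, smul_apply] using this
  have h7' : ∀ x, W (cr x) = (q:ℂ) • cr (W x) := fun x => by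
    have := congrArg (fun T : H →L[ℂ] H => T x) h7
    simpa [ContinuousLinearMap.mul_apply, smul_apply] using this
  have := main_lemma hq₁ hq₂ h1' h2' h4' h5' h6' h7' hc hcr hW hξ r' s' r s hsum
  rw [this]
  rfl
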